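/- Let (u_n) ⊆ C_c^∞(Ω) be a sequence with sup_n ‖|∇u_n|‖_{L^{p(·)}(Ω)} < ∞ and ‖u_n‖_{L^{p(·)}(Ω)} → 0. Suppose the finite Borel measures ν_n := |u_n(x)|^{q(x)} dx and μ_n := |∇u_n(x)|^{p(x)} dx on Ω converge weakly to finite Borel measures ν and μ respectively (i.e. ∫ f dν_n → ∫ f dν and ∫ f dμ_n → ∫ f dμ for every bounded continuous f : Ω → ℝ). Then for every φ ∈ C_c^∞(Ω) the reverse Hölder inequality holds: S(p(·),q(·),Ω)·‖φ‖_{L^{q(·)}_ν(Ω)} ≤ ‖φ‖_{L^{p(·)}_μ(Ω)}. -/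

import Mathlib

open MeasureTheory Metric Set Filter Topology

noncomputable section

abbrev EN (N : ℕ) : Type := EuclideanSpace ℝ (Fin N)

/-- Luxemburg norm of `u` on `U` w.r.t. the measure `m` and variable exponent `r`. -/
noncomputable def luxNormM {N : ℕ} (m : Measure (EN N)) (U : Set (EN N))
    (r u : EN N → ℝ) : ℝ :=
  sInf {l : ℝ | 0 < l ∧ (∫ x in U, (|u x| / l) ^ (r x) ∂m) ≤ 1}

/-- Luxemburg norm w.r.t. Lebesgue measure. -/
noncomputable def luxNorm {N : ℕ} (U : Set (EN N)) (r u : EN N → ℝ) : ℝ :=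
  luxNormM volume U r u

/-- `v` is a `C_c^∞` test function on `U`. -/
def TestFn {N : ℕ} (U : Set (EN N)) (v : EN N → ℝ) : Prop :=
  ContDiff ℝ (⊤ : ℕ∞) v ∧ HasCompactSupport v ∧ tsupport v ⊆ U

/-- Pointwise length of the gradient of `v`. -/
noncomputable def grad {N : ℕ} (v : EN N → ℝ) (x : EN N) : ℝ := ‖fderiv ℝ v x‖

/-- The variable exponent Sobolev constant `S(p(·),q(·),U)`. -/
noncomputable def sobolevConst {N : ℕ} (p q : EN N → ℝ) (U : Set (EN N)) : ℝ :=
  sInf {c : ℝ | ∃ v : EN N → ℝ, TestFn U v ∧ v ≠ 0 ∧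
    c = luxNorm U p (grad v) / luxNorm U q v}

/-- The critical Sobolev exponent of the value `pval` in dimension `N`. -/
noncomputable def pstar (N : ℕ) (pval : ℝ) : ℝ := N * pval / (N - pval)

/-- `K_r⁻¹`, the best constant in the classical Sobolev inequality. -/
noncomputable def Kinv (N : ℕ) (r : ℝ) : ℝ :=
  sobolevConst (fun _ => r) (fun _ => pstar N r) (univ : Set (EN N))

/-- The localized Sobolev constant `S̄_x`. -/
noncomputable def SbarAt {N : ℕ} (p q : EN N → ℝ) (x : EN N) : ℝ :=
  sSup {s : ℝ | ∃ ε : ℝ, 0 < ε ∧ s = sobolevConst p q (ball x ε)}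

/-- The critical set `A`. -/
def critSet {N : ℕ} (p q : EN N → ℝ) (Ω : Set (EN N)) : Set (EN N) :=
  {x | x ∈ Ω ∧ p x < N ∧ q x = pstar N (p x)}

/-- The critical constant `S̄ = inf_{x ∈ A} S̄_x`. -/
noncomputable def SbarCrit {N : ℕ} (p q : EN N → ℝ) (Ω : Set (EN N)) : ℝ :=
  sInf (SbarAt p q '' critSet p q Ω)

/-- A modulus of continuity `ρ` with `ρ(t) log(1/t) → 0` as `t → 0+`. -/
def Modulus (ρ : ℝ → ℝ) : Prop :=
  Tendsto (fun t => ρ t * Real.log (1 / t)) (nhdsWithin 0 (Set.Ioi 0)) (nhds 0)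

/-- `f` has modulus of continuity `ρ` on `Ω`. -/
def HasModulusOn {N : ℕ} (f : EN N → ℝ) (ρ : ℝ → ℝ) (Ω : Set (EN N)) : Prop :=
  ∀ x ∈ Ω, ∀ y ∈ Ω, |f x - f y| ≤ ρ (dist x y)
namespace S18

open MeasureTheory Metric Set Filter Topology

variable {N : ℕ}

/-- modular -/
noncomputable def md (m : Measure (EN N)) (Ω : Set (EN N)) (r u : EN N → ℝ) (l : ℝ) : ℝ :=
  ∫ x in Ω, (|u x| / l) ^ r x ∂m

lemma luxNormM_def (m : Measure (EN N)) (Ω : Set (EN N)) (r u : EN N → ℝ) :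
    luxNormM m Ω r u = sInf {l : ℝ | 0 < l ∧ md m Ω r u l ≤ 1} := rfl

structure Pack (m : Measure (EN N)) (Ω : Set (EN N)) (r u : EN N → ℝ)
    (c C K : ℝ) : Prop where
  hΩm : MeasurableSet Ω
  hfin : m Ω ≠ ⊤
  hr : Measurable r
  hc : 1 < c
  hrb : ∀ x ∈ Ω, c ≤ r x ∧ r x ≤ C
  hu : Measurable u
  hK : ∀ x, |u x| ≤ K

namespace Pack

variable {m : Measure (EN N)} {Ω : Set (EN N)} {r u : EN N → ℝ} {c C K : ℝ}

lemma hK0 (P : Pack m Ω r u c C K) : 0 ≤ K := (abs_nonneg _).trans (P.hK 0)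

lemma integrable (P : Pack m Ω r u c C K) {l : ℝ} (hl : 0 < l) :
    IntegrableOn (fun x => (|u x| / l) ^ r x) Ω m := by
  have hmeas : Measurable fun x => (|u x| / l) ^ r x :=
    (P.hu.abs.div_const l).pow P.hr
  refine Integrable.mono' (g := fun _ => max 1 ((K / l) ^ C))
    (integrableOn_const P.hfin) hmeas.aestronglyMeasurable ?_
  filter_upwards [ae_restrict_mem P.hΩm] with x hx
  have hb0 : (0:ℝ) ≤ |u x| / l := div_nonneg (abs_nonneg _) hl.le
  have hr0 : (0:ℝ) ≤ r x := le_trans (by linarith [P.hc]) (P.hrb x hx).1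
  rw [Real.norm_eq_abs, abs_of_nonneg (Real.rpow_nonneg hb0 _)]
  rcases le_or_gt (|u x| / l) 1 with hble | hbgt
  · exact le_trans (Real.rpow_le_one hb0 hble hr0) (le_max_left _ _)
  · have hC0 : (0:ℝ) ≤ C := hr0.trans (P.hrb x hx).2
    have h1 : (|u x| / l) ^ r x ≤ (|u x| / l) ^ C :=
      Real.rpow_le_rpow_of_exponent_le hbgt.le (P.hrb x hx).2
    have h2 : (|u x| / l) ^ C ≤ (K / l) ^ C :=
      Real.rpow_le_rpow hb0 (by gcongr; exact P.hK x) hC0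
    exact le_trans (h1.trans h2) (le_max_right _ _)

lemma md_mono (P : Pack m Ω r u c C K) {l l' : ℝ} (hl : 0 < l) (hll' : l ≤ l') :
    md m Ω r u l' ≤ md m Ω r u l := by
  have hl' : 0 < l' := hl.trans_le hll'
  refine setIntegral_mono_on (P.integrable hl') (P.integrable hl) P.hΩm fun x hx => ?_
  have hr0 : (0:ℝ) ≤ r x := le_trans (by linarith [P.hc]) (P.hrb x hx).1
  exact Real.rpow_le_rpow (div_nonneg (abs_nonneg _) hl'.le)
    (by gcongr) hr0

end Pack

lemma lux_nonneg (m : Measure (EN N)) (Ω : Set (EN N)) (r u : EN N → ℝ) :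
    0 ≤ luxNormM m Ω r u :=
  Real.sInf_nonneg fun _ hl => hl.1.le

lemma lux_le (m : Measure (EN N)) (Ω : Set (EN N)) (r u : EN N → ℝ) {l : ℝ}
    (hl : 0 < l) (hmd : md m Ω r u l ≤ 1) : luxNormM m Ω r u ≤ l :=
  csInf_le ⟨0, fun _ hx => hx.1.le⟩ ⟨hl, hmd⟩

end S18
namespace S18

open MeasureTheory Metric Set Filter Topology

variable {N : ℕ}

namespace Pack

variable {m : Measure (EN N)} {Ω : Set (EN N)} {r u : EN N → ℝ} {c C K : ℝ}

lemma sets_nonempty (P : Pack m Ω r u c C K) :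
    ∃ l : ℝ, 0 < l ∧ md m Ω r u l ≤ 1 := by
  set T : ℝ := (m Ω).toReal with hT
  have hT0 : 0 ≤ T := ENNReal.toReal_nonneg
  have hK0 := P.hK0
  set l : ℝ := (K + 1) * (T + 1) with hldef
  have hl : 0 < l := by nlinarith
  refine ⟨l, hl, ?_⟩
  have hpt : ∀ x ∈ Ω, (|u x| / l) ^ r x ≤ 1 / (T + 1) := by
    intro x hx
    have hr1 : (1:ℝ) ≤ r x := le_trans P.hc.le (P.hrb x hx).1
    have hb0 : (0:ℝ) ≤ |u x| / l := div_nonneg (abs_nonneg _) hl.le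
    have hble : |u x| / l ≤ 1 / (T + 1) := by
      rw [hldef, div_le_div_iff₀ hl (by positivity)]
      have := P.hK x
      nlinarith [abs_nonneg (u x), P.hK0]
    rcases eq_or_lt_of_le hb0 with hb | hb
    · rw [← hb, Real.zero_rpow (by linarith)]
      positivity
    · calc (|u x| / l) ^ r x ≤ (|u x| / l) ^ (1:ℝ) :=
            Real.rpow_le_rpow_of_exponent_ge hb
              (le_trans hble (by rw [div_le_one (by positivity)]; linarith)) hr1
        _ = |u x| / l := Real.rpow_one _
        _ ≤ 1 / (T + 1) := hble
  calc md m Ω r u l ≤ ∫ _ in Ω, 1 / (T + 1) ∂m := by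
        refine setIntegral_mono_on (P.integrable hl)
          (integrableOn_const P.hfin) P.hΩm hpt
    _ = T * (1 / (T + 1)) := by
        rw [setIntegral_const]; simp [hT, smul_eq_mul, Measure.real]
    _ ≤ 1 := by
        rw [mul_one_div, div_le_one (by positivity)]; linarith

lemma md_le_one (P : Pack m Ω r u c C K) {l : ℝ} (hl : luxNormM m Ω r u < l) :
    md m Ω r u l ≤ 1 := by
  obtain ⟨l', hl'mem, hl'lt⟩ :=
    exists_lt_of_csInf_lt (P.sets_nonempty.imp fun a ha => ha) hl
  exact le_trans (P.md_mono hl'mem.1 hl'lt.le) hl'mem.2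

lemma le_lux (P : Pack m Ω r u c C K) {l : ℝ} (hl : 0 < l)
    (hmd : 1 < md m Ω r u l) : l ≤ luxNormM m Ω r u := by
  refine le_csInf (P.sets_nonempty.imp fun a ha => ha) fun b hb => ?_
  by_contra hlt
  push_neg at hlt
  exact absurd (le_trans (P.md_mono hb.1 hlt.le) hb.2) (not_le.2 hmd)

/-- comparison: if `|v| ≤ K' * |u|` on `Ω` then `‖v‖ ≤ K' * ‖u‖`. -/
lemma lux_le_mul {v : EN N → ℝ} {K' Kv : ℝ}
    (P : Pack m Ω r u c C K) (Pv : Pack m Ω r v c C Kv) (hK' : 0 < K')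
    (hcomp : ∀ x ∈ Ω, |v x| ≤ K' * |u x|) :
    luxNormM m Ω r v ≤ K' * luxNormM m Ω r u := by
  refine le_of_forall_pos_le_add fun ε hε => ?_
  set l : ℝ := luxNormM m Ω r u + ε / K' with hldef
  have hl : 0 < l := by
    have := lux_nonneg m Ω r u; positivity
  have h1 : md m Ω r u l ≤ 1 :=
    P.md_le_one (lt_add_of_pos_right _ (div_pos hε hK'))
  have h2 : md m Ω r v (K' * l) ≤ 1 := by
    refine le_trans (le_trans (setIntegral_mono_on (Pv.integrable (mul_pos hK' hl))
      (P.integrable hl) P.hΩm fun x hx => ?_) le_rfl) h1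
    have hr0 : (0:ℝ) ≤ r x := le_trans (by linarith [P.hc]) (P.hrb x hx).1
    refine Real.rpow_le_rpow (div_nonneg (abs_nonneg _) (by positivity)) ?_ hr0
    rw [div_le_div_iff₀ (by positivity) hl]
    calc |v x| * l ≤ (K' * |u x|) * l := by
          have := hcomp x hx; nlinarith [abs_nonneg (v x)]
      _ = |u x| * (K' * l) := by ring
  calc luxNormM m Ω r v ≤ K' * l := lux_le m Ω r v (mul_pos hK' hl) h2
    _ = K' * luxNormM m Ω r u + ε := by
        rw [hldef]; field_simp

end Pack

end S18
namespace S18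

open MeasureTheory Metric Set Filter Topology

variable {N : ℕ}

namespace Pack

variable {m : Measure (EN N)} {Ω : Set (EN N)} {r : EN N → ℝ} {c C : ℝ}

/-- triangle inequality for the Luxemburg norm. -/
lemma lux_triangle {t u v : EN N → ℝ} {Kt Ku Kv : ℝ}
    (Pt : Pack m Ω r t c C Kt) (Pu : Pack m Ω r u c C Ku) (Pv : Pack m Ω r v c C Kv)
    (hcomp : ∀ x ∈ Ω, |t x| ≤ |u x| + |v x|) :
    luxNormM m Ω r t ≤ luxNormM m Ω r u + luxNormM m Ω r v := by
  refine le_of_forall_pos_le_add fun ε hε => ?_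
  have hu0 := lux_nonneg m Ω r u
  have hv0 := lux_nonneg m Ω r v
  set l₁ : ℝ := luxNormM m Ω r u + ε / 2 with hl₁def
  set l₂ : ℝ := luxNormM m Ω r v + ε / 2 with hl₂def
  have hl₁ : 0 < l₁ := by positivity
  have hl₂ : 0 < l₂ := by positivity
  have hl₁₂ : 0 < l₁ + l₂ := by positivity
  have h1 : md m Ω r u l₁ ≤ 1 := Pu.md_le_one (lt_add_of_pos_right _ (by positivity))
  have h2 : md m Ω r v l₂ ≤ 1 := Pv.md_le_one (lt_add_of_pos_right _ (by positivity))
  have key : md m Ω r t (l₁ + l₂) ≤ 1 := by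
    have hpt : ∀ x ∈ Ω, (|t x| / (l₁ + l₂)) ^ r x ≤
        (l₁ / (l₁ + l₂)) * (|u x| / l₁) ^ r x + (l₂ / (l₁ + l₂)) * (|v x| / l₂) ^ r x := by
      intro x hx
      have hr1 : (1:ℝ) ≤ r x := le_trans Pt.hc.le (Pt.hrb x hx).1
      have hw1 : (0:ℝ) ≤ l₁ / (l₁ + l₂) := by positivity
      have hw2 : (0:ℝ) ≤ l₂ / (l₁ + l₂) := by positivity
      have hwsum : l₁ / (l₁ + l₂) + l₂ / (l₁ + l₂) = 1 := by field_simp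
      have hconv := (convexOn_rpow hr1).2 (mem_Ici.2 (div_nonneg (abs_nonneg (u x)) hl₁.le))
        (mem_Ici.2 (div_nonneg (abs_nonneg (v x)) hl₂.le)) hw1 hw2 hwsum
      simp only [smul_eq_mul] at hconv
      have hbase : |t x| / (l₁ + l₂) ≤
          l₁ / (l₁ + l₂) * (|u x| / l₁) + l₂ / (l₁ + l₂) * (|v x| / l₂) := by
        have heq : l₁ / (l₁ + l₂) * (|u x| / l₁) + l₂ / (l₁ + l₂) * (|v x| / l₂)
            = (|u x| + |v x|) / (l₁ + l₂) := by field_simp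
        rw [heq]
        gcongr
        exact hcomp x hx
      calc (|t x| / (l₁ + l₂)) ^ r x
          ≤ (l₁ / (l₁ + l₂) * (|u x| / l₁) + l₂ / (l₁ + l₂) * (|v x| / l₂)) ^ r x :=
            Real.rpow_le_rpow (div_nonneg (abs_nonneg _) hl₁₂.le) hbase
              (le_trans (by linarith) hr1)
        _ ≤ _ := hconv
    have hint1 := Pu.integrable hl₁
    have hint2 := Pv.integrable hl₂
    have hintc : IntegrableOn (fun x => (l₁ / (l₁ + l₂)) * (|u x| / l₁) ^ r x
        + (l₂ / (l₁ + l₂)) * (|v x| / l₂) ^ r x) Ω m :=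
      (hint1.const_mul _).add (hint2.const_mul _)
    calc md m Ω r t (l₁ + l₂)
        ≤ ∫ x in Ω, ((l₁ / (l₁ + l₂)) * (|u x| / l₁) ^ r x
            + (l₂ / (l₁ + l₂)) * (|v x| / l₂) ^ r x) ∂m :=
          setIntegral_mono_on (Pt.integrable hl₁₂) hintc Pt.hΩm hpt
      _ = (l₁ / (l₁ + l₂)) * md m Ω r u l₁ + (l₂ / (l₁ + l₂)) * md m Ω r v l₂ := by
          rw [integral_add (hint1.const_mul _) (hint2.const_mul _),
            integral_const_mul, integral_const_mul]; rfl
      _ ≤ (l₁ / (l₁ + l₂)) * 1 + (l₂ / (l₁ + l₂)) * 1 := by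
          gcongr
      _ = 1 := by rw [mul_one, mul_one]; field_simp
  calc luxNormM m Ω r t ≤ l₁ + l₂ := lux_le m Ω r t hl₁₂ key
    _ = luxNormM m Ω r u + luxNormM m Ω r v + ε := by rw [hl₁def, hl₂def]; ring

end Pack

end S18
namespace S18

open MeasureTheory Metric Set Filter Topology

variable {N : ℕ}

lemma bddAbs {f : EN N → ℝ} (hf : Continuous f) (h : HasCompactSupport f) :
    ∃ K, ∀ x, |f x| ≤ K := by
  obtain ⟨K, hK⟩ := (hf.abs).bounded_above_of_compact_support h.abs
  exact ⟨K, fun x => by simpa using hK x⟩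

lemma mk_pack {m : Measure (EN N)} {Ω : Set (EN N)} {r : EN N → ℝ} {c C : ℝ}
    (hΩm : MeasurableSet Ω) (hfin : m Ω ≠ ⊤) (hr : Measurable r) (hc : 1 < c)
    (hrb : ∀ x ∈ Ω, c ≤ r x ∧ r x ≤ C) {w : EN N → ℝ}
    (hw : Continuous w) (hwcs : HasCompactSupport w) :
    ∃ K, Pack m Ω r w c C K := by
  obtain ⟨K, hK⟩ := bddAbs hw hwcs
  exact ⟨K, hΩm, hfin, hr, hc, hrb, hw.measurable, hK⟩

lemma md_scale {m : Measure (EN N)} {Ω : Set (EN N)} {r u : EN N → ℝ} {c C K : ℝ}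
    (P : Pack m Ω r u c C K) {l ε' : ℝ} (hl : 0 < l) (hε' : 0 < ε') :
    md m Ω r u (l * (1 + ε')) ≤ ((1 + ε') ^ c)⁻¹ * md m Ω r u l := by
  have h1ε : (0:ℝ) < 1 + ε' := by linarith
  have hpt : ∀ x ∈ Ω, (|u x| / (l * (1 + ε'))) ^ r x ≤
      ((1 + ε') ^ c)⁻¹ * (|u x| / l) ^ r x := by
    intro x hx
    have hrc : c ≤ r x := (P.hrb x hx).1
    have hb : |u x| / (l * (1 + ε')) = (|u x| / l) * (1 + ε')⁻¹ := by
      field_simp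
    rw [hb, Real.mul_rpow (div_nonneg (abs_nonneg _) hl.le) (by positivity)]
    rw [mul_comm (((1:ℝ) + ε') ^ c)⁻¹ _]
    refine mul_le_mul_of_nonneg_left ?_ (Real.rpow_nonneg (div_nonneg (abs_nonneg _) hl.le) _)
    rw [← Real.inv_rpow h1ε.le]
    exact Real.rpow_le_rpow_of_exponent_ge (by positivity)
      (inv_le_one_of_one_le₀ (by linarith)) hrc
  calc md m Ω r u (l * (1 + ε'))
      ≤ ∫ x in Ω, ((1 + ε') ^ c)⁻¹ * (|u x| / l) ^ r x ∂m :=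
        setIntegral_mono_on (P.integrable (by positivity))
          ((P.integrable hl).const_mul _) P.hΩm hpt
    _ = ((1 + ε') ^ c)⁻¹ * md m Ω r u l := by rw [integral_const_mul]; rfl

lemma lux_zero_fn {m : Measure (EN N)} {Ω : Set (EN N)} {r : EN N → ℝ}
    (hΩm : MeasurableSet Ω) (hrpos : ∀ x ∈ Ω, 0 < r x) :
    luxNormM m Ω r (0 : EN N → ℝ) = 0 := by
  have hmd : ∀ l : ℝ, 0 < l → md m Ω r (0 : EN N → ℝ) l = 0 := by
    intro l hl
    rw [md, setIntegral_congr_fun hΩm (g := fun _ => (0:ℝ)) ?_, integral_zero]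
    intro x hx
    simp only [Pi.zero_apply, abs_zero, zero_div]
    exact Real.zero_rpow (ne_of_gt (hrpos x hx))
  have : {l : ℝ | 0 < l ∧ md m Ω r (0 : EN N → ℝ) l ≤ 1} = Ioi 0 := by
    ext l; simp only [mem_setOf_eq, mem_Ioi, and_iff_left_iff_imp]
    intro hl; rw [hmd l hl]; norm_num
  rw [luxNormM_def, this, csInf_Ioi]

lemma sobolevConst_nonneg (p q : EN N → ℝ) (Ω : Set (EN N)) :
    0 ≤ sobolevConst p q Ω := by
  refine Real.sInf_nonneg fun s hs => ?_
  obtain ⟨v, _, _, rfl⟩ := hs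
  exact div_nonneg (lux_nonneg _ _ _ _) (lux_nonneg _ _ _ _)

lemma sobolev_step {Ω : Set (EN N)} (hΩm : MeasurableSet Ω) {p q : EN N → ℝ}
    (hqpos : ∀ x ∈ Ω, 0 < q x) {v : EN N → ℝ} (hv : TestFn Ω v) :
    sobolevConst p q Ω * luxNorm Ω q v ≤ luxNorm Ω p (grad v) := by
  have hS0 := sobolevConst_nonneg p q Ω
  by_cases hv0 : v = 0
  · rw [hv0]
    rw [luxNorm, lux_zero_fn hΩm hqpos, mul_zero]
    exact lux_nonneg _ _ _ _
  · have hmem : luxNorm Ω p (grad v) / luxNorm Ω q v ∈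
        {c : ℝ | ∃ w : EN N → ℝ, TestFn Ω w ∧ w ≠ 0 ∧
          c = luxNorm Ω p (grad w) / luxNorm Ω q w} := ⟨v, hv, hv0, rfl⟩
    have hble : BddBelow {c : ℝ | ∃ w : EN N → ℝ, TestFn Ω w ∧ w ≠ 0 ∧
        c = luxNorm Ω p (grad w) / luxNorm Ω q w} := by
      refine ⟨0, fun s hs => ?_⟩
      obtain ⟨w, _, _, rfl⟩ := hs
      exact div_nonneg (lux_nonneg _ _ _ _) (lux_nonneg _ _ _ _)
    have hSle : sobolevConst p q Ω ≤ luxNorm Ω p (grad v) / luxNorm Ω q v :=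
      csInf_le hble hmem
    rcases eq_or_lt_of_le (lux_nonneg volume Ω q v) with h0 | hpos
    · rw [luxNorm, ← h0, mul_zero]
      exact lux_nonneg _ _ _ _
    · have h2 := mul_le_mul_of_nonneg_right hSle (le_of_lt hpos)
      simp only [luxNorm] at h2 ⊢
      rwa [div_mul_cancel₀ _ (ne_of_gt hpos)] at h2

lemma testFn_mul {Ω : Set (EN N)} {φ w : EN N → ℝ} (hφ : TestFn Ω φ) (hw : TestFn Ω w) :
    TestFn Ω (fun x => φ x * w x) := by
  refine ⟨hφ.1.mul hw.1, ?_, ?_⟩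
  · exact hφ.2.1.mul_right
  · exact le_trans tsupport_mul_subset_left hφ.2.2

lemma gradCont {Ω : Set (EN N)} {v : EN N → ℝ} (hv : TestFn Ω v) :
    Continuous (grad v) :=
  (hv.1.continuous_fderiv (by norm_num)).norm

lemma gradCS {Ω : Set (EN N)} {v : EN N → ℝ} (hv : TestFn Ω v) :
    HasCompactSupport (grad v) :=
  (hv.2.1.fderiv ℝ).norm

lemma grad_mul_le {φ w : EN N → ℝ} (hφ : ContDiff ℝ (⊤:ℕ∞) φ) (hw : ContDiff ℝ (⊤:ℕ∞) w)
    (x : EN N) :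
    grad (fun y => φ y * w y) x ≤ |φ x| * grad w x + |w x| * grad φ x := by
  have hdφ : DifferentiableAt ℝ φ x := (hφ.differentiable (by norm_num)).differentiableAt
  have hdw : DifferentiableAt ℝ w x := (hw.differentiable (by norm_num)).differentiableAt
  rw [grad, fderiv_fun_mul hdφ hdw]
  refine le_trans (norm_add_le _ _) ?_
  rw [norm_smul, norm_smul]
  simp only [Real.norm_eq_abs, grad]
  exact le_rfl

end S18
namespace S18

open MeasureTheory Metric Set Filter Topology

variable {N : ℕ}

lemma md_weak_conv {Ω : Set (EN N)} (hΩo : IsOpen Ω) {e : EN N → ℝ} (hec : Continuous e)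
    {c C : ℝ} (hc : 1 < c) (heb : ∀ x ∈ Ω, c ≤ e x ∧ e x ≤ C)
    {φ : EN N → ℝ} (hφ : TestFn Ω φ)
    (m : Measure (EN N)) [IsFiniteMeasure m]
    {w : ℕ → EN N → ℝ} (hw0 : ∀ n x, 0 ≤ w n x)
    (hconv : ∀ f : EN N → ℝ, Continuous f → (∃ B, ∀ x, |f x| ≤ B) →
      Tendsto (fun n => ∫ x in Ω, f x * (w n x) ^ e x) atTop (nhds (∫ x, f x ∂m)))
    {l : ℝ} (hl : 0 < l) :
    Tendsto (fun n => ∫ x in Ω, (|φ x| * w n x / l) ^ e x) atTop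
      (nhds (md m Ω e φ l)) := by
  have hφc : Continuous φ := hφ.1.continuous
  have hφcs : HasCompactSupport φ := hφ.2.1
  have hφsupp : tsupport φ ⊆ Ω := hφ.2.2
  -- a compact set L with tsupport φ ⊆ interior L ⊆ L ⊆ Ω
  obtain ⟨L, hLc, hLint, hLΩ⟩ := exists_compact_between hφcs hΩo hφsupp
  -- Urysohn cutoff
  obtain ⟨χ, hχ1, hχ0, hχcs, hχmem⟩ :=
    exists_continuous_one_zero_of_isCompact hφcs isOpen_interior.isClosed_compl
      (disjoint_compl_right_iff_subset.2 hLint)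
  set g : EN N → ℝ := fun x => (|φ x| / l) ^ e x with hgdef
  set f : EN N → ℝ := fun x => χ x * g x with hfdef
  have hepos : ∀ x ∈ Ω, 0 < e x := fun x hx => lt_of_lt_of_le (by linarith) (heb x hx).1
  -- f vanishes outside L
  have hfL : ∀ x, x ∉ L → f x = 0 := by
    intro x hx
    have : χ x = 0 := hχ0 (fun h => hx (interior_subset h))
    simp [hfdef, this]
  -- continuity of f
  have hfc : Continuous f := by
    rw [continuous_iff_continuousAt]
    intro x
    by_cases hx : x ∈ Ω
    · exact (χ.continuous.continuousAt).mul
        (((hφc.abs.div_const l).continuousAt).rpow hec.continuousAt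
          (Or.inr (hepos x hx)))
    · have hxL : x ∈ Lᶜ := fun h => hx (hLΩ h)
      have hev : f =ᶠ[nhds x] fun _ => (0:ℝ) := by
        filter_upwards [hLc.isClosed.isOpen_compl.mem_nhds hxL] with y hy
        exact hfL y hy
      exact continuousAt_const.congr hev.symm
  -- boundedness of f
  have hfb : ∃ B, ∀ x, |f x| ≤ B := by
    refine bddAbs hfc (HasCompactSupport.intro hLc hfL)
  -- equality of f with g on Ω
  have hfg : ∀ x ∈ Ω, f x = g x := by
    intro x hx
    by_cases hxs : x ∈ tsupport φ
    · simp [hfdef, hχ1 hxs]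
    · have hφ0 : φ x = 0 := image_eq_zero_of_notMem_tsupport hxs
      have hg0 : g x = 0 := by
        simp [hgdef, hφ0, Real.zero_rpow (ne_of_gt (hepos x hx))]
      simp [hfdef, hg0]
  -- equality of sequence integrands on Ω
  have hseq : ∀ n, ∫ x in Ω, f x * (w n x) ^ e x
      = ∫ x in Ω, (|φ x| * w n x / l) ^ e x := by
    intro n
    refine setIntegral_congr_fun hΩo.measurableSet fun x hx => ?_
    have hrw : |φ x| * w n x / l = (|φ x| / l) * w n x := by ring
    rw [hrw, Real.mul_rpow (div_nonneg (abs_nonneg _) hl.le) (hw0 n x)]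
    rw [hfg x hx, hgdef]
  -- identification of the limit
  have hlim : ∫ x, f x ∂m = md m Ω e φ l := by
    rw [← setIntegral_eq_integral_of_forall_compl_eq_zero
      (fun x hx => hfL x (fun h => hx (hLΩ h)))]
    exact setIntegral_congr_fun hΩo.measurableSet hfg
  have := hconv f hfc hfb
  rw [hlim] at this
  exact this.congr hseq

end S18
namespace S18
open MeasureTheory Metric Set Filter Topology
lemma md_def {N : ℕ} (m : Measure (EN N)) (Ω : Set (EN N)) (r u : EN N → ℝ) (l : ℝ) :
    md m Ω r u l = ∫ x in Ω, (|u x| / l) ^ r x ∂m := rfl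
end S18

open S18 in
/-- the reverse Hölder inequality for the weak limit measures of
`|u_n|^{q(x)} dx` and `|∇u_n|^{p(x)} dx` when `u_n → 0` in `L^{p(·)}`. -/
theorem stmt18 {N : ℕ} (hN : 2 ≤ N) (Ω : Set (EN N)) (hΩo : IsOpen Ω)
    (hΩne : Ω.Nonempty) (hΩb : Bornology.IsBounded Ω)
    (p q : EN N → ℝ) (hpc : Continuous p) (hqc : Continuous q)
    (c C : ℝ) (hc : 1 < c)
    (hpb : ∀ x ∈ Ω, c ≤ p x ∧ p x ≤ C)
    (hqb : ∀ x ∈ Ω, c ≤ q x ∧ q x ≤ C)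
    (u : ℕ → EN N → ℝ) (hu : ∀ n, TestFn Ω (u n))
    (M : ℝ) (hM : ∀ n, luxNorm Ω p (grad (u n)) ≤ M)
    (h0 : Tendsto (fun n => luxNorm Ω p (u n)) atTop (nhds 0))
    (ν μ : Measure (EN N)) (hν : IsFiniteMeasure ν) (hμ : IsFiniteMeasure μ)
    (hνw : ∀ f : EN N → ℝ, Continuous f → (∃ B, ∀ x, |f x| ≤ B) →
      Tendsto (fun n => ∫ x in Ω, f x * |u n x| ^ q x) atTop (nhds (∫ x, f x ∂ν)))
    (hμw : ∀ f : EN N → ℝ, Continuous f → (∃ B, ∀ x, |f x| ≤ B) →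
      Tendsto (fun n => ∫ x in Ω, f x * grad (u n) x ^ p x) atTop (nhds (∫ x, f x ∂μ))) :
    ∀ φ : EN N → ℝ, TestFn Ω φ →
      sobolevConst p q Ω * luxNormM ν Ω q φ ≤ luxNormM μ Ω p φ := by
  intro φ hφ
  have hΩm : MeasurableSet Ω := hΩo.measurableSet
  have hvolfin : volume Ω ≠ ⊤ := hΩb.measure_lt_top.ne
  have hνfin : ν Ω ≠ ⊤ := measure_ne_top ν Ω
  have hμfin : μ Ω ≠ ⊤ := measure_ne_top μ Ω
  have hqpos : ∀ x ∈ Ω, 0 < q x := fun x hx => lt_of_lt_of_le (by linarith) (hqb x hx).1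
  set S := sobolevConst p q Ω with hSdef
  have hS0 : 0 ≤ S := sobolevConst_nonneg p q Ω
  set A := luxNormM ν Ω q φ with hAdef
  set B := luxNormM μ Ω p φ with hBdef
  have hA0 : 0 ≤ A := hAdef ▸ lux_nonneg _ _ _ _
  have hB0 : 0 ≤ B := hBdef ▸ lux_nonneg _ _ _ _
  clear_value S A B
  have hφc : Continuous φ := hφ.1.continuous
  obtain ⟨Kφ, hKφ⟩ := bddAbs hφc hφ.2.1
  have Pμφ : Pack μ Ω p φ c C Kφ :=
    ⟨hΩm, hμfin, hpc.measurable, hc, hpb, hφc.measurable, hKφ⟩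
  obtain ⟨G, hG⟩ := bddAbs (gradCont hφ) (gradCS hφ)
  have hG0 : 0 ≤ G := (abs_nonneg _).trans (hG 0)
  -- main estimate
  have key : ∀ l₁ : ℝ, 0 < l₁ → l₁ < A → ∀ ε : ℝ, 0 < ε → ∀ ε' : ℝ, 0 < ε' →
      S * l₁ ≤ (B + ε) * (1 + ε') + ε := by
    intro l₁ hl₁ hl₁A ε hε ε' hε'
    have hBε : 0 < B + ε := by linarith
    have h1ε' : (0:ℝ) < 1 + ε' := by linarith
    have hrc : (1:ℝ) < (1 + ε') ^ c :=
      Real.one_lt_rpow_iff_of_pos h1ε' |>.2 (Or.inl ⟨by linarith, by linarith⟩)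
    -- ν side: modular of φ at l₁ exceeds 1
    have h1 : 1 < md ν Ω q φ l₁ := by
      by_contra h
      push_neg at h
      have := lux_le ν Ω q φ hl₁ h
      rw [← hAdef] at this
      exact absurd this (not_le.2 hl₁A)
    -- μ side: modular of φ at B+ε is at most 1
    have h2 : md μ Ω p φ (B + ε) ≤ 1 :=
      Pμφ.md_le_one (by rw [← hBdef]; linarith)
    -- eventual statements
    have evν : ∀ᶠ n in atTop, 1 < ∫ x in Ω, (|φ x| * |u n x| / l₁) ^ q x :=
      (md_weak_conv hΩo hqc hc hqb hφ ν (w := fun n x => |u n x|)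
        (fun n x => abs_nonneg _) hνw hl₁).eventually (lt_mem_nhds h1)
    have evμ : ∀ᶠ n in atTop,
        (∫ x in Ω, (|φ x| * grad (u n) x / (B + ε)) ^ p x) < (1 + ε') ^ c :=
      (md_weak_conv hΩo hpc hc hpb hφ μ (w := fun n x => grad (u n) x)
        (fun n x => norm_nonneg _) hμw hBε).eventually
        (gt_mem_nhds (lt_of_le_of_lt h2 hrc))
    have evsmall : ∀ᶠ n in atTop, luxNorm Ω p (u n) < ε / (G + 1) :=
      h0.eventually (gt_mem_nhds (div_pos hε (by linarith)))
    obtain ⟨n, hn1, hn2, hn3⟩ := (evν.and (evμ.and evsmall)).exists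
    -- the test function v = φ * uₙ
    set v : EN N → ℝ := fun x => φ x * u n x with hvdef
    have hvtest : TestFn Ω v := testFn_mul hφ (hu n)
    set w₁ : EN N → ℝ := fun x => φ x * grad (u n) x with hw₁def
    set w₂ : EN N → ℝ := fun x => grad φ x * u n x with hw₂def
    obtain ⟨K₁, Pv⟩ := mk_pack hΩm hvolfin hqc.measurable hc hqb
      hvtest.1.continuous hvtest.2.1
    obtain ⟨K₂, Pw₁⟩ := mk_pack hΩm hvolfin hpc.measurable hc hpb
      (hφc.mul (gradCont (hu n))) ((gradCS (hu n)).mul_left)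
    obtain ⟨K₃, Pw₂⟩ := mk_pack hΩm hvolfin hpc.measurable hc hpb
      ((gradCont hφ).mul (hu n).1.continuous) ((hu n).2.1.mul_left)
    obtain ⟨K₄, Pgv⟩ := mk_pack hΩm hvolfin hpc.measurable hc hpb
      (gradCont hvtest) (gradCS hvtest)
    obtain ⟨K₅, Pun⟩ := mk_pack hΩm hvolfin hpc.measurable hc hpb
      (hu n).1.continuous (hu n).2.1
    -- (a) lower bound on ‖v‖_q
    have ha : l₁ ≤ luxNormM volume Ω q v := by
      refine Pv.le_lux hl₁ ?_
      have heq : md volume Ω q v l₁ = ∫ x in Ω, (|φ x| * |u n x| / l₁) ^ q x := by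
        rw [md_def]
        exact setIntegral_congr_fun hΩm fun x _ => by rw [hvdef, abs_mul]
      rw [heq]; exact hn1
    -- (d) upper bound on ‖w₁‖_p
    have heq0 : True := trivial
    have hmd1 : md volume Ω p w₁ ((B + ε) * (1 + ε')) ≤ 1 := by
      have heq : md volume Ω p w₁ (B + ε)
          = ∫ x in Ω, (|φ x| * grad (u n) x / (B + ε)) ^ p x := by
        rw [md_def]
        refine setIntegral_congr_fun hΩm fun x _ => by
          simp only [hw₁def, grad, abs_mul, abs_norm]
      have hscale := md_scale Pw₁ hBε hε'
      have hlt : md volume Ω p w₁ (B + ε) < (1 + ε') ^ c := by rw [heq]; exact hn2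
      calc md volume Ω p w₁ ((B + ε) * (1 + ε'))
          ≤ ((1 + ε') ^ c)⁻¹ * md volume Ω p w₁ (B + ε) := hscale
        _ ≤ ((1 + ε') ^ c)⁻¹ * (1 + ε') ^ c := by
            refine mul_le_mul_of_nonneg_left hlt.le (by positivity)
        _ = 1 := inv_mul_cancel₀ (by positivity)
    have hd : luxNormM volume Ω p w₁ ≤ (B + ε) * (1 + ε') := by
      exact lux_le _ _ _ _ (mul_pos hBε h1ε') hmd1
    -- (e) ‖w₂‖_p ≤ ε
    have he : luxNormM volume Ω p w₂ ≤ ε := by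
      have hcomp : ∀ x ∈ Ω, |w₂ x| ≤ (G + 1) * |u n x| := by
        intro x _
        rw [hw₂def, abs_mul]
        exact mul_le_mul_of_nonneg_right (by linarith [hG x]) (abs_nonneg _)
      calc luxNormM volume Ω p w₂ ≤ (G + 1) * luxNormM volume Ω p (u n) :=
            Pun.lux_le_mul Pw₂ (by linarith) hcomp
        _ ≤ (G + 1) * (ε / (G + 1)) := by
            refine mul_le_mul_of_nonneg_left ?_ (by linarith)
            exact le_of_lt hn3
        _ = ε := by field_simp
    -- (c) triangle
    have hcmp : ∀ x ∈ Ω, |grad v x| ≤ |w₁ x| + |w₂ x| := by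
      intro x _
      have h6 := grad_mul_le hφ.1 (hu n).1 x
      have e0 : (0:ℝ) ≤ grad v x := norm_nonneg _
      have e1 : (0:ℝ) ≤ grad (u n) x := norm_nonneg _
      have e2 : (0:ℝ) ≤ grad φ x := norm_nonneg _
      have e3 : |w₁ x| = |φ x| * grad (u n) x := by
        rw [hw₁def, abs_mul, abs_of_nonneg e1]
      have e4 : |w₂ x| = grad φ x * |u n x| := by
        rw [hw₂def, abs_mul, abs_of_nonneg e2]
      rw [abs_of_nonneg e0, e3, e4]
      calc grad v x ≤ |φ x| * grad (u n) x + |u n x| * grad φ x := h6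
        _ = |φ x| * grad (u n) x + grad φ x * |u n x| := by ring
    have hct : luxNormM volume Ω p (grad v)
        ≤ luxNormM volume Ω p w₁ + luxNormM volume Ω p w₂ :=
      Pack.lux_triangle Pgv Pw₁ Pw₂ hcmp
    -- (b) Sobolev
    have hb : S * luxNormM volume Ω q v ≤ luxNormM volume Ω p (grad v) := by
      have h5 := sobolev_step hΩm hqpos hvtest (p := p)
      rw [hSdef]
      simpa only [luxNorm] using h5
    calc S * l₁ ≤ S * luxNormM volume Ω q v := mul_le_mul_of_nonneg_left ha hS0
      _ ≤ luxNormM volume Ω p (grad v) := hb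
      _ ≤ luxNormM volume Ω p w₁ + luxNormM volume Ω p w₂ := hct
      _ ≤ (B + ε) * (1 + ε') + ε := add_le_add hd he
  -- conclude
  rcases eq_or_lt_of_le hA0 with hA | hA
  · rw [← hA, mul_zero]; exact hB0
  · refine le_of_forall_pos_le_add fun θ hθ => ?_
    set δ : ℝ := min (min 1 (θ / (B + S + 3))) (A / 2) with hδdef
    have hδpos : 0 < δ :=
      lt_min (lt_min one_pos (div_pos hθ (by linarith))) (half_pos hA)
    have hδ1 : δ ≤ 1 := le_trans (min_le_left _ _) (min_le_left _ _)
    have hδθ : δ ≤ θ / (B + S + 3) := le_trans (min_le_left _ _) (min_le_right _ _)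
    have hδA : δ ≤ A / 2 := min_le_right _ _
    have hl₁ : 0 < A - δ := by linarith
    have hkey := key (A - δ) hl₁ (by linarith) δ hδpos δ hδpos
    have hδθ' : δ * (B + S + 3) ≤ θ := by
      have h3 : (0:ℝ) < B + S + 3 := by linarith
      calc δ * (B + S + 3) ≤ (θ / (B + S + 3)) * (B + S + 3) :=
            mul_le_mul_of_nonneg_right hδθ h3.le
        _ = θ := div_mul_cancel₀ _ (ne_of_gt h3)
    nlinarith [hS0, hB0, hδpos, hδ1]
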